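/- Let k ≥ 1 and α ≥ 0 be integers and let z be a real number with 0 < z < 1. Then ∑_{n=1}^{∞} Q_k(n;α)·n·(1-z)²·z^{n-1} = ((k+α)!/α!)·(1-z)^{k+1}·∑_{i=0}^{∞} (1+k)_i·(1+k+α)_i·z^i / ((1+α)_i·i!). In other words, the k-th LUE moment, when n-1 is chosen randomly according to a Negative Binomial distribution with parameters (2,z), equals this Gauss hypergeometric ₂F₁(1+k, 1+k+α; 1+α; z) expression. -/

import Mathlib

/-- The rising Pochhammer symbol `(a)_i = a (a+1) ⋯ (a+i-1)`. -/
noncomputable def poch (a : ℝ) (i : ℕ) : ℝ := ∏ j ∈ Finset.range i, (a + j)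

/-- The k-th moment of the n×n LUE normalised one-point function with parameter α
(hypergeometric representation of Cunden–Mezzadri–O'Connell–Simm). -/
noncomputable def QLUE (k n α : ℕ) : ℝ :=
  ((n : ℝ) + α) * (Nat.factorial (k + α)) / (Nat.factorial (1 + α)) *
    ∑ i ∈ Finset.range n,
      poch (1 - (k : ℝ)) i * poch (2 + (k : ℝ)) i * poch (1 - (n : ℝ)) i /
        (poch 2 i * poch (2 + (α : ℝ)) i * (Nat.factorial i))

open Finset

lemma poch_zero (a : ℝ) : poch a 0 = 1 := by simp [poch]

lemma poch_succ (a : ℝ) (i : ℕ) : poch a (i+1) = poch a i * (a + i) := by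
  simp [poch, prod_range_succ]

lemma poch_succ' (a : ℝ) (i : ℕ) : poch a (i+1) = a * poch (a+1) i := by
  rw [poch, prod_range_succ', poch]
  rw [show ∀ P:ℝ, P * (a + (0:ℕ)) = a * P by intro P; push_cast; ring]
  congr 1
  exact prod_congr rfl fun j _ => by push_cast; ring

lemma poch_add (a : ℝ) (m n : ℕ) : poch a (m+n) = poch a m * poch (a+m) n := by
  rw [poch, prod_range_add, poch, poch]
  congr 1
  exact prod_congr rfl fun j _ => by push_cast; ring

lemma poch_pos {a : ℝ} (ha : 0 < a) (i : ℕ) : 0 < poch a i := by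
  apply prod_pos
  intro j _
  positivity

lemma poch_neg_nat (m i : ℕ) : poch (-(m:ℝ)) i = (-1)^i * (m.descFactorial i) := by
  induction i with
  | zero => simp [poch_zero]
  | succ i ih =>
    rw [poch_succ, ih, Nat.descFactorial_succ]
    rcases le_or_gt i m with h | h
    · push_cast [Nat.cast_sub h]
      ring
    · rw [Nat.descFactorial_eq_zero_iff_lt.2 h]
      simp

lemma fact_mul_poch (m i : ℕ) : (m.factorial : ℝ) * poch (1+(m:ℝ)) i = (m+i).factorial := by
  induction i with
  | zero => simp [poch_zero]
  | succ i ih =>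
    rw [poch_succ, ← mul_assoc, ih, show m + (i+1) = (m+i)+1 by ring, Nat.factorial_succ]
    push_cast
    ring

lemma vand (i : ℕ) : ∀ (b : ℝ) (k : ℕ),
    ∑ j ∈ range (i+1), (i.choose j : ℝ) * (k.descFactorial j) * poch (b + j) (i - j)
      = poch (b + k) i := by
  induction i with
  | zero => intro b k; simp [poch_zero]
  | succ i ih =>
    intro b k
    rw [Finset.sum_range_succ']
    have step1 : ∀ j ∈ range (i+1),
        (((i+1).choose (j+1) : ℕ) : ℝ) * (k.descFactorial (j+1)) * poch (b + ((j+1 : ℕ):ℝ)) (i+1 - (j+1))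
        = (i.choose (j+1) : ℝ) * (k.descFactorial (j+1)) * poch (b + ((j+1:ℕ):ℝ)) (i - j)
          + (i.choose j : ℝ) * (k.descFactorial (j+1)) * poch (b + ((j+1:ℕ):ℝ)) (i - j) := by
      intro j hj
      rw [show i + 1 - (j + 1) = i - j by omega, Nat.choose_succ_succ]
      push_cast
      ring
    rw [Finset.sum_congr rfl step1, Finset.sum_add_distrib]
    -- A := first piece + f 0
    have hA : (∑ j ∈ range (i+1), (i.choose (j+1) : ℝ) * (k.descFactorial (j+1)) * poch (b + ((j+1:ℕ):ℝ)) (i - j))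
        + (((i+1).choose 0 : ℝ) * (k.descFactorial 0) * poch (b + ((0:ℕ):ℝ)) (i+1-0))
        = (b + i) * poch (b + k) i := by
      have expand : ∀ j ∈ range (i+1),
          (i.choose j : ℝ) * (k.descFactorial j) * poch (b + j) (i+1-j)
          = ((i.choose j : ℝ) * (k.descFactorial j) * poch (b + j) (i - j)) * (b + i) := by
        intro j hj
        rw [mem_range] at hj
        have hji : j ≤ i := by omega
        rw [show i + 1 - j = (i - j) + 1 by omega, poch_succ]
        rw [show b + (j:ℝ) + ((i - j : ℕ) : ℝ) = b + i by
          rw [Nat.cast_sub hji]; ring]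
        ring
      calc (∑ j ∈ range (i+1), (i.choose (j+1) : ℝ) * (k.descFactorial (j+1)) * poch (b + ((j+1:ℕ):ℝ)) (i - j))
            + (((i+1).choose 0 : ℝ) * (k.descFactorial 0) * poch (b + ((0:ℕ):ℝ)) (i+1-0))
          = ∑ j ∈ range (i+2), (i.choose j : ℝ) * (k.descFactorial j) * poch (b + j) (i+1-j) := by
            rw [Finset.sum_range_succ' (fun j => (i.choose j : ℝ) * (k.descFactorial j) * poch (b + j) (i+1-j)) (i+1)]
            congr 1
            · apply Finset.sum_congr rfl
              intro j hj
              rw [show i + 1 - (j+1) = i - j by omega]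
            · norm_num
        _ = ∑ j ∈ range (i+1), (i.choose j : ℝ) * (k.descFactorial j) * poch (b + j) (i+1-j) := by
            rw [Finset.sum_range_succ]
            rw [Nat.choose_eq_zero_of_lt (by omega : i < i+1)]
            simp
        _ = ∑ j ∈ range (i+1), ((i.choose j : ℝ) * (k.descFactorial j) * poch (b + j) (i - j)) * (b + i) :=
            Finset.sum_congr rfl expand
        _ = (∑ j ∈ range (i+1), (i.choose j : ℝ) * (k.descFactorial j) * poch (b + j) (i - j)) * (b + i) := by
            rw [← Finset.sum_mul]
        _ = (b + i) * poch (b + k) i := by rw [ih b k]; ring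
    -- B := second piece = k * poch (b+k) i
    have hB : (∑ j ∈ range (i+1), (i.choose j : ℝ) * (k.descFactorial (j+1)) * poch (b + ((j+1:ℕ):ℝ)) (i - j))
        = (k : ℝ) * poch (b + k) i := by
      cases k with
      | zero => simp [Nat.descFactorial]
      | succ k' =>
        have expand : ∀ j ∈ range (i+1),
            (i.choose j : ℝ) * ((k'+1).descFactorial (j+1) : ℕ) * poch (b + ((j+1:ℕ):ℝ)) (i - j)
            = ((k'+1):ℝ) * ((i.choose j : ℝ) * (k'.descFactorial j) * poch ((b+1) + j) (i - j)) := by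
          intro j hj
          rw [Nat.succ_descFactorial_succ]
          rw [show b + ((j+1:ℕ):ℝ) = (b+1) + (j:ℝ) by push_cast; ring]
          push_cast
          ring
        rw [Finset.sum_congr rfl expand, ← Finset.mul_sum, ih (b+1) k']
        rw [show b + 1 + (k' : ℝ) = b + ((k'+1 : ℕ) : ℝ) by push_cast; ring]
        push_cast
        ring
    rw [poch_succ]
    linear_combination hA + hB

noncomputable def qcoef (k α j : ℕ) : ℝ :=
  (k.descFactorial j : ℝ) * poch (1+(k:ℝ)) j / (poch (1+(α:ℝ)) j * j.factorial)

lemma nat_h3 {i j k : ℕ} (hj : j ≤ i) :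
    (i+k).choose (k+j) * ((k+j).factorial * i.factorial) =
      (i+k).factorial * (i.choose j * j.factorial) := by
  have A : (i+k).choose (k+j) * (k+j).factorial * ((i+k) - (k+j)).factorial = (i+k).factorial :=
    Nat.choose_mul_factorial_mul_factorial (by omega)
  have hij : (i+k) - (k+j) = i - j := by omega
  rw [hij] at A
  have B : i.choose j * j.factorial * (i-j).factorial = i.factorial :=
    Nat.choose_mul_factorial_mul_factorial hj
  apply Nat.eq_of_mul_eq_mul_right (Nat.factorial_pos (i-j))
  calc (i+k).choose (k+j) * ((k+j).factorial * i.factorial) * (i-j).factorial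
      = ((i+k).choose (k+j) * (k+j).factorial * (i-j).factorial) * i.factorial := by ring
    _ = (i+k).factorial * i.factorial := by rw [A]
    _ = (i+k).factorial * (i.choose j * j.factorial * (i-j).factorial) := by rw [B]
    _ = (i+k).factorial * (i.choose j * j.factorial) * (i-j).factorial := by ring

lemma poch_one_add_nat_pos (α : ℕ) (m : ℕ) : 0 < poch (1+(α:ℝ)) m :=
  poch_pos (by positivity) m

lemma key_j (k α i j : ℕ) :
    qcoef k α j * ((i+k).choose (k+j) : ℝ)
      = (((i+k).factorial : ℝ) / ((i.factorial : ℝ) * k.factorial * poch (1+(α:ℝ)) i))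
        * ((i.choose j : ℝ) * (k.descFactorial j) * poch (1 + (α:ℝ) + j) (i - j)) := by
  rcases le_or_gt j i with hji | hji
  · -- main case
    have hPi : poch (1+(α:ℝ)) i = poch (1+(α:ℝ)) j * poch (1 + (α:ℝ) + j) (i-j) := by
      rw [show i = j + (i - j) by omega, poch_add]
      rw [show j + (i-j) - j = i - j by omega]
    have hfact : (k.factorial : ℝ) * poch (1+(k:ℝ)) j = ((k+j).factorial : ℝ) := fact_mul_poch k j
    have h3 : (((i+k).choose (k+j) : ℕ) : ℝ) * (((k+j).factorial : ℝ) * i.factorial)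
        = ((i+k).factorial : ℝ) * ((i.choose j : ℝ) * j.factorial) := by
      exact_mod_cast congrArg (Nat.cast : ℕ → ℝ) (nat_h3 hji)
    have E : ((i+k).choose (k+j) : ℝ) * poch (1+(k:ℝ)) j * i.factorial * k.factorial
        = ((i+k).factorial : ℝ) * (i.choose j) * j.factorial := by
      linear_combination (((i+k).choose (k+j) : ℝ) * i.factorial) * hfact + h3
    have hPj : (poch (1+(α:ℝ)) j) ≠ 0 := ne_of_gt (poch_one_add_nat_pos α j)
    have hPi' : (poch (1+(α:ℝ)) i) ≠ 0 := ne_of_gt (poch_one_add_nat_pos α i)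
    have hjf : ((j.factorial : ℝ)) ≠ 0 := by exact_mod_cast j.factorial_ne_zero
    have hif : ((i.factorial : ℝ)) ≠ 0 := by exact_mod_cast i.factorial_ne_zero
    have hkf : ((k.factorial : ℝ)) ≠ 0 := by exact_mod_cast k.factorial_ne_zero
    rw [qcoef]
    field_simp
    rw [hPi]
    linear_combination ((k.descFactorial j : ℝ) * poch (1+(α:ℝ)) j * poch (1 + (α:ℝ) + j) (i-j)) * E
  · -- j > i : both sides vanish
    rw [Nat.choose_eq_zero_of_lt (show i + k < k + j by omega),
        Nat.choose_eq_zero_of_lt hji]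
    simp

lemma hyp_coeff (k α i : ℕ) :
    poch (1+(k:ℝ)) i * poch (1+(k:ℝ)+(α:ℝ)) i / (poch (1+(α:ℝ)) i * i.factorial)
      = ∑ j ∈ range (k+1), qcoef k α j * ((i+k).choose (k+j) : ℝ) := by
  have hsum : ∑ j ∈ range (k+1), qcoef k α j * ((i+k).choose (k+j) : ℝ)
      = (((i+k).factorial : ℝ) / ((i.factorial : ℝ) * k.factorial * poch (1+(α:ℝ)) i))
        * ∑ j ∈ range (i+1), (i.choose j : ℝ) * (k.descFactorial j) * poch (1 + (α:ℝ) + j) (i - j) := by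
    rw [Finset.mul_sum]
    have lhsM : ∑ j ∈ range (k+1), qcoef k α j * ((i+k).choose (k+j) : ℝ)
        = ∑ j ∈ range (max i k + 1), qcoef k α j * ((i+k).choose (k+j) : ℝ) := by
      apply Finset.sum_subset
      · apply Finset.range_subset_range.2; omega
      · intro j _ hj
        rw [mem_range, not_lt] at hj
        rw [qcoef, Nat.descFactorial_eq_zero_iff_lt.2 (by omega)]
        simp
    rw [lhsM]
    have rhsM : ∑ j ∈ range (i+1),
          (((i+k).factorial : ℝ) / ((i.factorial : ℝ) * k.factorial * poch (1+(α:ℝ)) i))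
            * ((i.choose j : ℝ) * (k.descFactorial j) * poch (1 + (α:ℝ) + j) (i - j))
        = ∑ j ∈ range (max i k + 1),
          (((i+k).factorial : ℝ) / ((i.factorial : ℝ) * k.factorial * poch (1+(α:ℝ)) i))
            * ((i.choose j : ℝ) * (k.descFactorial j) * poch (1 + (α:ℝ) + j) (i - j)) := by
      apply Finset.sum_subset
      · apply Finset.range_subset_range.2; omega
      · intro j _ hj
        rw [mem_range, not_lt] at hj
        rw [Nat.choose_eq_zero_of_lt (by omega)]
        simp
    rw [rhsM]
    exact Finset.sum_congr rfl fun j _ => key_j k α i j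
  rw [hsum, vand i (1 + (α:ℝ)) k]
  have hfact : (k.factorial : ℝ) * poch (1+(k:ℝ)) i = ((k+i).factorial : ℝ) := fact_mul_poch k i
  have hPi' : (poch (1+(α:ℝ)) i) ≠ 0 := ne_of_gt (poch_one_add_nat_pos α i)
  have hif : ((i.factorial : ℝ)) ≠ 0 := by exact_mod_cast i.factorial_ne_zero
  have hkf : ((k.factorial : ℝ)) ≠ 0 := by exact_mod_cast k.factorial_ne_zero
  rw [show (1:ℝ) + (α:ℝ) + (k:ℝ) = 1 + (k:ℝ) + (α:ℝ) by ring,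
      show (i:ℕ) + k = k + i by ring]
  rw [← hfact]
  field_simp



-- S2 / general shifted binomial series
lemma hasSum_shift (hz0 : 0 < z) (hz1 : z < 1) (m j : ℕ) (hjm : j ≤ m) :
    HasSum (fun i : ℕ => ((i + m - j).choose m : ℝ) * z ^ i) (z ^ j / (1-z) ^ (m+1)) := by
  have hz : ‖z‖ < 1 := by rw [Real.norm_eq_abs, abs_of_pos hz0]; exact hz1
  have base := hasSum_choose_mul_geometric_of_norm_lt_one (𝕜 := ℝ) m hz
  have shifted : HasSum (fun i : ℕ => ((i + j + m - j).choose m : ℝ) * z ^ (i + j))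
      (z ^ j * (1 / (1-z) ^ (m+1))) := by
    have : ∀ i : ℕ, ((i + j + m - j).choose m : ℝ) * z ^ (i + j)
        = z ^ j * (((i + m).choose m : ℝ) * z ^ i) := by
      intro i
      rw [show i + j + m - j = i + m by omega, pow_add]
      ring
    rw [funext this]
    exact base.mul_left _
  have := (hasSum_nat_add_iff (f := fun i : ℕ => ((i + m - j).choose m : ℝ) * z ^ i) j).mp shifted
  have hzero : ∑ i ∈ range j, ((i + m - j).choose m : ℝ) * z ^ i = 0 := by
    apply Finset.sum_eq_zero
    intro i hi
    rw [mem_range] at hi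
    rw [Nat.choose_eq_zero_of_lt (by omega)]
    simp
  rw [hzero, add_zero] at this
  rw [div_eq_mul_one_div]
  exact this

-- instance for part 1: ∑ C(n+1, j+1) z^n = z^j/(1-z)^{j+2}
lemma hasSum_S1 (hz0 : 0 < z) (hz1 : z < 1) (j : ℕ) :
    HasSum (fun n : ℕ => (((n+1).choose (j+1)) : ℝ) * z ^ n) (z ^ j / (1-z) ^ (j+2)) := by
  have := hasSum_shift hz0 hz1 (j+1) j (by omega)
  have e : ∀ n : ℕ, ((n + (j+1) - j).choose (j+1) : ℝ) * z ^ n = ((n+1).choose (j+1) : ℝ) * z ^ n := by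
    intro n; rw [show n + (j+1) - j = n + 1 by omega]
  rw [funext e] at this
  exact this

-- instance for part 2: ∑_i C(i+k, k+j) z^i = z^j/(1-z)^{k+j+1}
lemma hasSum_S2 (hz0 : 0 < z) (hz1 : z < 1) (k j : ℕ) :
    HasSum (fun i : ℕ => (((i+k).choose (k+j)) : ℝ) * z ^ i) (z ^ j / (1-z) ^ (k+j+1)) := by
  have := hasSum_shift hz0 hz1 (k+j) j (by omega)
  have e : ∀ i : ℕ, ((i + (k+j) - j).choose (k+j) : ℝ) * z ^ i = ((i+k).choose (k+j) : ℝ) * z ^ i := by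
    intro i; rw [show i + (k+j) - j = i + k by omega]
  rw [funext e] at this
  exact this

lemma hasSum_finset_sum' {ι : Type*} (s : Finset ι) (f : ι → ℕ → ℝ) (a : ι → ℝ)
    (h : ∀ i ∈ s, HasSum (f i) (a i)) :
    HasSum (fun n => ∑ i ∈ s, f i n) (∑ i ∈ s, a i) := by
  classical
  induction s using Finset.induction with
  | empty => simpa using hasSum_zero
  | @insert x t hx ih =>
    rw [Finset.sum_insert hx]
    have := (h x (Finset.mem_insert_self x t)).add
      (ih (fun i hi => h i (Finset.mem_insert_of_mem hi)))
    simpa [Finset.sum_insert hx] using this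

lemma part2 (k α : ℕ) {z : ℝ} (hz0 : 0 < z) (hz1 : z < 1) :
    HasSum (fun i : ℕ =>
        poch (1 + (k:ℝ)) i * poch (1 + (k:ℝ) + (α:ℝ)) i * z ^ i /
          (poch (1 + (α:ℝ)) i * i.factorial))
      (∑ j ∈ range (k+1), qcoef k α j * (z ^ j / (1-z) ^ (k+j+1))) := by
  have h := hasSum_finset_sum' (range (k+1))
      (fun j i => qcoef k α j * (((i+k).choose (k+j) : ℝ) * z ^ i))
      (fun j => qcoef k α j * (z^j/(1-z)^(k+j+1)))
      (fun j _ => (hasSum_S2 hz0 hz1 k j).mul_left _)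
  have e : (fun i : ℕ => ∑ j ∈ range (k+1), qcoef k α j * (((i+k).choose (k+j) : ℝ) * z ^ i))
      = fun i : ℕ => poch (1 + (k:ℝ)) i * poch (1 + (k:ℝ) + (α:ℝ)) i * z ^ i /
          (poch (1 + (α:ℝ)) i * i.factorial) := by
    funext i
    rw [show (poch (1 + (k:ℝ)) i * poch (1 + (k:ℝ) + (α:ℝ)) i * z ^ i /
          (poch (1 + (α:ℝ)) i * i.factorial))
        = (poch (1 + (k:ℝ)) i * poch (1 + (k:ℝ) + (α:ℝ)) i /
          (poch (1 + (α:ℝ)) i * i.factorial)) * z ^ i by ring]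
    rw [hyp_coeff k α i, Finset.sum_mul]
    exact Finset.sum_congr rfl fun j _ => by ring
  rw [e] at h
  exact h

-- Nat identity h2
lemma nat_h2 (n i : ℕ) :
    (i+2) * (n+1).choose (i+2) + (i+1) * (n+1).choose (i+1) = (n+1) * (n+1).choose (i+1) := by
  rcases le_or_gt i n with h | h
  · have h3 := Nat.choose_succ_right_eq (n+1) (i+1)
    have h4 : n + 1 - (i+1) = n - i := by omega
    rw [h4] at h3
    have h5 : (i+2) * (n+1).choose (i+2) = (n-i) * (n+1).choose (i+1) := by
      rw [mul_comm]; rw [h3]; ring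
    rw [h5, ← add_mul]
    congr 1
    omega
  · rw [Nat.choose_eq_zero_of_lt (by omega), Nat.choose_eq_zero_of_lt (by omega)]
    simp

-- the key polynomial-in-a choose identity over ℝ
lemma choose_poly (a : ℝ) (n i : ℕ) :
    ((n:ℝ)+1) * ((n:ℝ)+1+a) * (n.choose i) =
      ((i:ℝ)+1) * (((i:ℝ)+2) * ((n+1).choose (i+2)) + ((i:ℝ)+1+a) * ((n+1).choose (i+1))) := by
  have h1 : ((n+1) * n.choose i : ℕ) = ((n+1).choose (i+1)) * (i+1) := Nat.add_one_mul_choose_eq n i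
  have h1' : ((n:ℝ)+1) * (n.choose i) = ((n+1).choose (i+1) : ℕ) * ((i:ℝ)+1) := by
    exact_mod_cast congrArg (Nat.cast : ℕ → ℝ) h1
  have h2' : ((i:ℝ)+2) * ((n+1).choose (i+2)) + ((i:ℝ)+1) * ((n+1).choose (i+1))
      = ((n:ℝ)+1) * ((n+1).choose (i+1)) := by
    exact_mod_cast congrArg (Nat.cast : ℕ → ℝ) (nat_h2 n i)
  linear_combination ((n:ℝ)+1+a) * h1' - ((i:ℝ)+1) * h2'


noncomputable def C1 (k α : ℕ) : ℝ := ((k+α).factorial : ℝ) / ((1+α).factorial : ℝ)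

noncomputable def Ecoef (k α i : ℕ) : ℝ :=
  ((k-1).descFactorial i : ℝ) * poch (2+(k:ℝ)) i / (i.factorial * poch (2+(α:ℝ)) i)

lemma poch_two_eq (i : ℕ) : poch 2 i = ((1+i).factorial : ℝ) := by
  have h := fact_mul_poch 1 i
  norm_num at h
  rw [show (2:ℝ) = 1 + ((1:ℕ):ℝ) by norm_num] at h ⊢
  exact h

lemma neg_one_pow_sq (i : ℕ) : ((-1:ℝ)^i) * ((-1:ℝ)^i) = 1 := by
  rw [← pow_add, show i + i = 2*i by ring, pow_mul]
  norm_num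

lemma term_eq (k α n i : ℕ) (hk : 1 ≤ k) (z : ℝ) :
    (((n:ℝ)+1) + α) * ((k+α).factorial) / ((1+α).factorial) *
      (poch (1 - (k:ℝ)) i * poch (2 + (k:ℝ)) i * poch (-(n:ℝ)) i /
        (poch 2 i * poch (2 + (α:ℝ)) i * (i.factorial))) * (((n:ℝ)+1) * ((1-z)^2 * z^n))
    = C1 k α * (1-z)^2 * Ecoef k α i *
        (((i:ℝ)+2) * ((((n+1).choose (i+2)) :ℝ) * z^n)
          + ((i:ℝ)+1+(α:ℝ)) * ((((n+1).choose (i+1)):ℝ) * z^n)) := by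
  have hprod : poch (1 - (k:ℝ)) i * poch (2 + (k:ℝ)) i * poch (-(n:ℝ)) i
      = ((k-1).descFactorial i : ℝ) * (n.descFactorial i) * poch (2 + (k:ℝ)) i := by
    have h1 : (1 : ℝ) - (k:ℝ) = -(((k-1:ℕ)):ℝ) := by
      rw [Nat.cast_sub hk]; push_cast; ring
    rw [h1, poch_neg_nat, poch_neg_nat]
    calc ((-1:ℝ)^i * ((k-1).descFactorial i)) * poch (2 + (k:ℝ)) i * ((-1:ℝ)^i * (n.descFactorial i))
        = (((-1:ℝ)^i) * ((-1:ℝ)^i)) * (((k-1).descFactorial i : ℝ) * (n.descFactorial i) * poch (2 + (k:ℝ)) i) := by ring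
      _ = ((k-1).descFactorial i : ℝ) * (n.descFactorial i) * poch (2 + (k:ℝ)) i := by
          rw [neg_one_pow_sq, one_mul]
  rw [hprod, poch_two_eq, C1, Ecoef]
  have hdesc : ((n.descFactorial i : ℕ) : ℝ) = (i.factorial : ℝ) * (n.choose i) := by
    exact_mod_cast congrArg (Nat.cast : ℕ → ℝ) (Nat.descFactorial_eq_factorial_mul_choose n i)
  rw [hdesc]
  have cp := choose_poly (α:ℝ) n i
  have h2α : poch (2+(α:ℝ)) i ≠ 0 := ne_of_gt (poch_pos (by positivity) i)
  have hif : ((i.factorial : ℝ)) ≠ 0 := by exact_mod_cast i.factorial_ne_zero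
  have h1αf : (((1+α).factorial : ℝ)) ≠ 0 := by exact_mod_cast (1+α).factorial_ne_zero
  have hi1 : ((i:ℝ)+1) ≠ 0 := by positivity
  have hfs : (((1+i).factorial : ℕ) : ℝ) = ((i:ℝ)+1) * (i.factorial : ℝ) := by
    rw [show 1 + i = i + 1 by ring, Nat.factorial_succ]; push_cast; ring
  rw [hfs]
  set M : ℝ := ((k+α).factorial : ℝ)/((1+α).factorial) *
      (((k-1).descFactorial i : ℝ) * poch (2+(k:ℝ)) i/(i.factorial * poch (2+(α:ℝ)) i)) *
      ((1-z)^2 * z^n) * (1/((i:ℝ)+1)) with hM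
  have e1 : (((n:ℝ)+1) + α) * ((k+α).factorial) / ((1+α).factorial) *
      (((k-1).descFactorial i : ℝ) * ((i.factorial : ℝ) * (n.choose i)) * poch (2 + (k:ℝ)) i /
        ((((i:ℝ)+1) * (i.factorial : ℝ)) * poch (2 + (α:ℝ)) i * (i.factorial))) *
      (((n:ℝ)+1) * ((1-z)^2 * z^n))
      = M * (((n:ℝ)+1) * (((n:ℝ)+1+(α:ℝ)) * (n.choose i))) := by
    rw [hM]; field_simp
  have e2 : ((k+α).factorial : ℝ) / ((1+α).factorial) * (1-z)^2 *
      (((k-1).descFactorial i : ℝ) * poch (2+(k:ℝ)) i / (i.factorial * poch (2+(α:ℝ)) i)) *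
        (((i:ℝ)+2) * ((((n+1).choose (i+2)) :ℝ) * z^n)
          + ((i:ℝ)+1+(α:ℝ)) * ((((n+1).choose (i+1)):ℝ) * z^n))
      = M * (((i:ℝ)+1) * (((i:ℝ)+2) * (((n+1).choose (i+2)):ℝ)
          + ((i:ℝ)+1+(α:ℝ)) * (((n+1).choose (i+1)):ℝ))) := by
    rw [hM]; field_simp
  rw [e1, e2]
  congr 1
  rw [← cp]
  ring

lemma part1 (k α : ℕ) (hk : 1 ≤ k) {z : ℝ} (hz0 : 0 < z) (hz1 : z < 1) :
    HasSum (fun n : ℕ => QLUE k (n + 1) α * ((n : ℝ) + 1) * (1 - z) ^ 2 * z ^ n)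
      (∑ i ∈ range k, C1 k α * (1-z)^2 * Ecoef k α i *
        (((i:ℝ)+2) * (z^(i+1)/(1-z)^(i+3)) + ((i:ℝ)+1+(α:ℝ)) * (z^i/(1-z)^(i+2)))) := by
  have hg : ∀ i ∈ range k, HasSum
      (fun n : ℕ => C1 k α * (1-z)^2 * Ecoef k α i *
        (((i:ℝ)+2) * ((((n+1).choose (i+2)):ℝ) * z^n)
          + ((i:ℝ)+1+(α:ℝ)) * ((((n+1).choose (i+1)):ℝ) * z^n)))
      (C1 k α * (1-z)^2 * Ecoef k α i *
        (((i:ℝ)+2) * (z^(i+1)/(1-z)^(i+3)) + ((i:ℝ)+1+(α:ℝ)) * (z^i/(1-z)^(i+2)))) := by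
    intro i _
    exact (((hasSum_S1 hz0 hz1 (i+1)).mul_left ((i:ℝ)+2)).add
      ((hasSum_S1 hz0 hz1 i).mul_left ((i:ℝ)+1+(α:ℝ)))).mul_left _
  have H := hasSum_finset_sum' (range k) _ _ hg
  have fdecomp : (fun n : ℕ => QLUE k (n + 1) α * ((n : ℝ) + 1) * (1 - z) ^ 2 * z ^ n)
      = fun n : ℕ => ∑ i ∈ range k,
          C1 k α * (1-z)^2 * Ecoef k α i *
            (((i:ℝ)+2) * ((((n+1).choose (i+2)):ℝ) * z^n)
              + ((i:ℝ)+1+(α:ℝ)) * ((((n+1).choose (i+1)):ℝ) * z^n)) := by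
    funext n
    have hswap : ∑ i ∈ Finset.range (n+1),
          poch (1 - (k:ℝ)) i * poch (2 + (k:ℝ)) i * poch (-(n:ℝ)) i /
            (poch 2 i * poch (2 + (α:ℝ)) i * (i.factorial))
        = ∑ i ∈ Finset.range k,
          poch (1 - (k:ℝ)) i * poch (2 + (k:ℝ)) i * poch (-(n:ℝ)) i /
            (poch 2 i * poch (2 + (α:ℝ)) i * (i.factorial)) := by
      have h1 : ∀ i, n + 1 ≤ i → poch (-(n:ℝ)) i = 0 := by
        intro i hi
        rw [poch_neg_nat, Nat.descFactorial_eq_zero_iff_lt.2 (by omega)]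
        simp
      have h2 : ∀ i, k ≤ i → poch (1 - (k:ℝ)) i = 0 := by
        intro i hi
        rw [show (1:ℝ) - (k:ℝ) = -(((k-1:ℕ)):ℝ) by rw [Nat.cast_sub hk]; push_cast; ring]
        rw [poch_neg_nat, Nat.descFactorial_eq_zero_iff_lt.2 (by omega)]
        simp
      have e1 : ∑ i ∈ Finset.range (n+1), poch (1 - (k:ℝ)) i * poch (2 + (k:ℝ)) i * poch (-(n:ℝ)) i /
            (poch 2 i * poch (2 + (α:ℝ)) i * (i.factorial))
          = ∑ i ∈ Finset.range (max (n+1) k), poch (1 - (k:ℝ)) i * poch (2 + (k:ℝ)) i * poch (-(n:ℝ)) i /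
            (poch 2 i * poch (2 + (α:ℝ)) i * (i.factorial)) := by
        apply Finset.sum_subset (Finset.range_subset_range.2 (by omega))
        intro i _ hi
        rw [mem_range, not_lt] at hi
        rw [h1 i (by omega)]
        simp
      have e2 : ∑ i ∈ Finset.range k, poch (1 - (k:ℝ)) i * poch (2 + (k:ℝ)) i * poch (-(n:ℝ)) i /
            (poch 2 i * poch (2 + (α:ℝ)) i * (i.factorial))
          = ∑ i ∈ Finset.range (max (n+1) k), poch (1 - (k:ℝ)) i * poch (2 + (k:ℝ)) i * poch (-(n:ℝ)) i /
            (poch 2 i * poch (2 + (α:ℝ)) i * (i.factorial)) := by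
        apply Finset.sum_subset (Finset.range_subset_range.2 (by omega))
        intro i _ hi
        rw [mem_range, not_lt] at hi
        rw [h2 i (by omega)]
        simp
      rw [e1, ← e2]
    rw [QLUE]
    have hcast : ((n+1 : ℕ) : ℝ) = (n:ℝ) + 1 := by push_cast; ring
    rw [hcast]
    simp only [show (1:ℝ) - ((n:ℝ)+1) = -(n:ℝ) from by ring]
    rw [hswap, Finset.mul_sum _ _ (((n:ℝ)+1+(α:ℝ)) * (((k+α).factorial:ℝ)) / (((1+α).factorial:ℝ))), Finset.sum_mul, Finset.sum_mul, Finset.sum_mul]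
    refine Finset.sum_congr rfl fun i _ => ?_
    rw [show ((n:ℝ) + 1 + (α:ℝ)) * ((k+α).factorial : ℝ) / ((1+α).factorial : ℝ) *
        (poch (1 - (k:ℝ)) i * poch (2 + (k:ℝ)) i * poch (-(n:ℝ)) i /
          (poch 2 i * poch (2 + (α:ℝ)) i * (i.factorial))) * ((n:ℝ)+1) * (1-z)^2 * z^n
      = ((n:ℝ) + 1 + (α:ℝ)) * ((k+α).factorial : ℝ) / ((1+α).factorial : ℝ) *
        (poch (1 - (k:ℝ)) i * poch (2 + (k:ℝ)) i * poch (-(n:ℝ)) i /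
          (poch 2 i * poch (2 + (α:ℝ)) i * (i.factorial))) * (((n:ℝ)+1) * ((1-z)^2 * z^n)) from by ring]
    exact term_eq k α n i hk z
  rw [fdecomp]
  exact H

lemma fact_one_add (α : ℕ) : (((1+α).factorial : ℕ) : ℝ) = (1+(α:ℝ)) * (α.factorial : ℝ) := by
  rw [show 1 + α = α + 1 by ring, Nat.factorial_succ]
  push_cast; ring

lemma FI_term (k α i : ℕ) (hk : 1 ≤ k) (hik : i < k) :
    C1 k α * (Ecoef k α i * ((i:ℝ)+2) + Ecoef k α (i+1) * ((i:ℝ)+2+(α:ℝ)))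
      = (((k+α).factorial : ℝ)/(α.factorial:ℝ)) * qcoef k α (i+1) := by
  obtain ⟨k', rfl⟩ : ∃ k', k = k'+1 := ⟨k-1, by omega⟩
  have hik' : i ≤ k' := by omega
  rw [C1, Ecoef, Ecoef, qcoef, fact_one_add]
  rw [Nat.descFactorial_succ, Nat.succ_descFactorial_succ]
  rw [show (k'+1) - 1 = k' by omega]
  rw [poch_succ (2+((k'+1:ℕ)):ℝ) i]
  rw [show poch (1+((k'+1:ℕ):ℝ)) (i+1) = (1+((k'+1:ℕ):ℝ)) * poch (2+((k'+1:ℕ):ℝ)) i from by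
    rw [poch_succ']; congr 1; push_cast; ring]
  rw [show poch (1+(α:ℝ)) (i+1) = (1+(α:ℝ)) * poch (2+(α:ℝ)) i from by
    rw [poch_succ']; congr 1; push_cast; ring]
  rw [poch_succ (2+(α:ℝ)) i]
  rw [Nat.factorial_succ]
  have hQ : poch (2+(α:ℝ)) i ≠ 0 := ne_of_gt (poch_pos (by positivity) i)
  have hif : ((i.factorial : ℝ)) ≠ 0 := by exact_mod_cast i.factorial_ne_zero
  have hαf : ((α.factorial : ℝ)) ≠ 0 := by exact_mod_cast α.factorial_ne_zero
  have h2αi : (2+(α:ℝ)+(i:ℝ)) ≠ 0 := by positivity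
  have h1α : (1+(α:ℝ)) ≠ 0 := by positivity
  have hi1 : ((i:ℝ)+1) ≠ 0 := by positivity
  have hcast : ((k' - i : ℕ) : ℝ) = (k' : ℝ) - (i : ℝ) := by
    rw [Nat.cast_sub hik']
  push_cast [hcast]
  field_simp
  ring

lemma FI (k α : ℕ) (hk : 1 ≤ k) (u : ℝ) :
    ∑ i ∈ range k, C1 k α * Ecoef k α i * (((i:ℝ)+2) * u^(i+1) + ((i:ℝ)+1+(α:ℝ)) * u^i)
      = (((k+α).factorial : ℝ) / (α.factorial:ℝ)) * ∑ j ∈ range (k+1), qcoef k α j * u^j := by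
  rw [Finset.mul_sum,
    Finset.sum_range_succ' (fun j => (((k+α).factorial : ℝ)/(α.factorial:ℝ)) * (qcoef k α j * u^j)) k]
  have split : ∀ i ∈ range k,
      C1 k α * Ecoef k α i * (((i:ℝ)+2) * u^(i+1) + ((i:ℝ)+1+(α:ℝ)) * u^i)
      = C1 k α * Ecoef k α i * (((i:ℝ)+2) * u^(i+1))
        + C1 k α * Ecoef k α i * (((i:ℝ)+1+(α:ℝ)) * u^i) := fun i _ => by ring
  rw [Finset.sum_congr rfl split, Finset.sum_add_distrib]
  have hEk : Ecoef k α k = 0 := by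
    rw [Ecoef, Nat.descFactorial_eq_zero_iff_lt.2 (by omega)]
    simp
  have ext : ∑ i ∈ range k, C1 k α * Ecoef k α i * (((i:ℝ)+1+(α:ℝ)) * u^i)
      = ∑ i ∈ range (k+1), C1 k α * Ecoef k α i * (((i:ℝ)+1+(α:ℝ)) * u^i) := by
    rw [Finset.sum_range_succ, hEk]
    ring
  rw [ext, Finset.sum_range_succ' (fun i => C1 k α * Ecoef k α i * (((i:ℝ)+1+(α:ℝ)) * u^i)) k]
  rw [← add_assoc, ← Finset.sum_add_distrib]
  congr 1
  · refine Finset.sum_congr rfl fun i hi => ?_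
    rw [mem_range] at hi
    have := FI_term k α i hk hi
    have e : C1 k α * Ecoef k α i * (((i:ℝ)+2) * u^(i+1))
        + C1 k α * Ecoef k α (i+1) * ((((i+1:ℕ):ℝ))+1+(α:ℝ)) * u^(i+1)
        = (C1 k α * (Ecoef k α i * ((i:ℝ)+2) + Ecoef k α (i+1) * ((i:ℝ)+2+(α:ℝ)))) * u^(i+1) := by
      push_cast; ring
    calc C1 k α * Ecoef k α i * (((i:ℝ)+2) * u^(i+1))
          + C1 k α * Ecoef k α (i+1) * (((((i+1:ℕ)):ℝ)+1+(α:ℝ)) * u^(i+1))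
        = (C1 k α * (Ecoef k α i * ((i:ℝ)+2) + Ecoef k α (i+1) * ((i:ℝ)+2+(α:ℝ)))) * u^(i+1) := by
          push_cast; ring
      _ = (((k+α).factorial : ℝ)/(α.factorial:ℝ)) * qcoef k α (i+1) * u^(i+1) := by rw [this]
      _ = (((k+α).factorial : ℝ)/(α.factorial:ℝ)) * (qcoef k α (i+1) * u^(i+1)) := by ring
  · -- constant terms
    have hE0 : Ecoef k α 0 = 1 := by
      rw [Ecoef]
      simp [poch_zero]
    have hq0 : qcoef k α 0 = 1 := by
      rw [qcoef]
      simp [poch_zero]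
    rw [hE0, hq0, C1, fact_one_add]
    have hαf : ((α.factorial : ℝ)) ≠ 0 := by exact_mod_cast α.factorial_ne_zero
    have h1α : (1+(α:ℝ)) ≠ 0 := by positivity
    push_cast
    field_simp
    ring

lemma final_eq (k α : ℕ) (hk : 1 ≤ k) {z : ℝ} (hz0 : 0 < z) (hz1 : z < 1) :
    ∑ i ∈ range k, C1 k α * (1-z)^2 * Ecoef k α i *
        (((i:ℝ)+2) * (z^(i+1)/(1-z)^(i+3)) + ((i:ℝ)+1+(α:ℝ)) * (z^i/(1-z)^(i+2)))
      = (((k+α).factorial : ℝ) / (α.factorial : ℝ)) * (1-z)^(k+1) *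
        ∑ j ∈ range (k+1), qcoef k α j * (z^j/(1-z)^(k+j+1)) := by
  have hz : (1:ℝ) - z ≠ 0 := ne_of_gt (by linarith)
  have t1 : ∀ m:ℕ, (1-z)^2 * (z^m/(1-z)^(m+2)) = (z/(1-z))^m := by
    intro m
    rw [div_pow, pow_add]
    field_simp
  have t2 : ∀ j:ℕ, (1-z)^(k+1) * (z^j/(1-z)^(k+j+1)) = (z/(1-z))^j := by
    intro j
    rw [div_pow, show k+j+1 = (k+1)+j by ring, pow_add]
    field_simp
    ring
  have lhs_eq : ∑ i ∈ range k, C1 k α * (1-z)^2 * Ecoef k α i *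
        (((i:ℝ)+2) * (z^(i+1)/(1-z)^(i+3)) + ((i:ℝ)+1+(α:ℝ)) * (z^i/(1-z)^(i+2)))
      = ∑ i ∈ range k, C1 k α * Ecoef k α i *
        (((i:ℝ)+2) * (z/(1-z))^(i+1) + ((i:ℝ)+1+(α:ℝ)) * (z/(1-z))^i) := by
    refine Finset.sum_congr rfl fun i _ => ?_
    rw [← t1 i, ← t1 (i+1), show (i+1)+2 = i+3 from rfl]
    ring
  rw [lhs_eq, FI k α hk (z/(1-z))]
  rw [show (((k+α).factorial : ℝ) / (α.factorial : ℝ)) * (1-z)^(k+1) *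
      ∑ j ∈ range (k+1), qcoef k α j * (z^j/(1-z)^(k+j+1))
    = ∑ j ∈ range (k+1), (((k+α).factorial : ℝ) / (α.factorial : ℝ)) *
        (qcoef k α j * ((1-z)^(k+1) * (z^j/(1-z)^(k+j+1)))) from by
      rw [Finset.mul_sum]; exact Finset.sum_congr rfl fun j _ => by ring]
  rw [Finset.mul_sum]
  exact Finset.sum_congr rfl fun j _ => by rw [t2 j]


/-- The k-th LUE moment, with `n-1` chosen according to a Negative Binomial distribution
with parameters `(2,z)`, equals a Gauss hypergeometric `₂F₁(1+k, 1+k+α; 1+α; z)` expression. -/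
theorem LUE_randomised_moment (k α : ℕ) (hk : 1 ≤ k) (z : ℝ) (hz0 : 0 < z) (hz1 : z < 1) :
    HasSum (fun n : ℕ => QLUE k (n + 1) α * ((n : ℝ) + 1) * (1 - z) ^ 2 * z ^ n)
      ((Nat.factorial (k + α) / Nat.factorial α) * (1 - z) ^ (k + 1) *
        ∑' i : ℕ,
          poch (1 + (k : ℝ)) i * poch (1 + (k : ℝ) + α) i * z ^ i /
            (poch (1 + (α : ℝ)) i * (Nat.factorial i))) := by
  have h2 := part2 k α hz0 hz1
  rw [h2.tsum_eq, ← final_eq k α hk hz0 hz1]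
  exact part1 k α hk hz0 hz1
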